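/- Define β(c) = (∫_{ℝ³} 1/(e^{|p|²+c}+1) dp) / (∫_{ℝ³} |p|²/(e^{|p|²+c}+1) dp)^{3/5} for c ∈ ℝ. Then β is strictly decreasing on [−ln 3, ∞). -/

import Mathlib

open Real MeasureTheory

noncomputable def betaFn (c : ℝ) : ℝ :=
    (∫ p : EuclideanSpace ℝ (Fin 3), 1 / (exp (‖p‖ ^ 2 + c) + 1)) /
      (∫ p : EuclideanSpace ℝ (Fin 3), ‖p‖ ^ 2 / (exp (‖p‖ ^ 2 + c) + 1)) ^ ((3:ℝ) / 5)

open Set Metric Filter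
open scoped ENNReal

noncomputable section BetaAux

namespace BetaAux

def fermi (c r : ℝ) : ℝ := (Real.exp (r ^ 2 + c) + 1)⁻¹
def gfun (c r : ℝ) : ℝ := Real.exp (r ^ 2 + c) / (Real.exp (r ^ 2 + c) + 1) ^ 2
def Ik (k : ℕ) (c : ℝ) : ℝ := ∫ r in Set.Ioi (0:ℝ), r ^ k * fermi c r
def Jk (k : ℕ) (c : ℝ) : ℝ := ∫ r in Set.Ioi (0:ℝ), r ^ k * gfun c r

lemma epos (x : ℝ) : (0:ℝ) < Real.exp x + 1 := by positivity

lemma fermi_pos (c r : ℝ) : 0 < fermi c r := by unfold fermi; positivity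

lemma gfun_pos (c r : ℝ) : 0 < gfun c r := by unfold gfun; positivity

lemma fermi_le (c r : ℝ) : fermi c r ≤ Real.exp (-(r ^ 2 + c)) := by
  rw [Real.exp_neg]
  exact inv_anti₀ (Real.exp_pos _) (by linarith [Real.exp_pos (r^2+c)])

lemma gfun_le (c r : ℝ) : gfun c r ≤ Real.exp (-(r ^ 2 + c)) := by
  unfold gfun
  rw [Real.exp_neg, div_le_iff₀ (by positivity)]
  rw [inv_mul_eq_div, le_div_iff₀ (Real.exp_pos _)]
  have h := Real.exp_pos (r^2+c)
  nlinarith [Real.exp_pos (r^2+c)]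

lemma fermi_cont (c : ℝ) : Continuous (fermi c) := by
  unfold fermi
  exact (Continuous.add (Real.continuous_exp.comp (by continuity)) continuous_const).inv₀
    (fun r => (epos _).ne')

lemma gfun_cont (c : ℝ) : Continuous (gfun c) := by
  unfold gfun
  exact ((Real.continuous_exp.comp (by continuity)).div
    ((Continuous.add (Real.continuous_exp.comp (by continuity)) continuous_const).pow 2)
    (fun r => by positivity))

lemma integrable_pow_exp (k : ℕ) (c : ℝ) :
    IntegrableOn (fun r : ℝ => r ^ k * Real.exp (-(r ^ 2 + c))) (Ioi 0) := by
  have h := (integrableOn_rpow_mul_exp_neg_mul_sq (b := 1) one_pos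
    (s := (k:ℝ)) (by exact lt_of_lt_of_le (by norm_num) (Nat.cast_nonneg k))).mul_const (Real.exp (-c))
  apply (integrableOn_congr_fun ?_ measurableSet_Ioi).mpr h
  intro r hr
  rw [mem_Ioi] at hr
  simp only [Real.rpow_natCast, mul_assoc, ← Real.exp_add]
  ring_nf

lemma integrableOn_pow_fermi (k : ℕ) (c : ℝ) :
    IntegrableOn (fun r : ℝ => r ^ k * fermi c r) (Ioi 0) := by
  apply Integrable.mono' (integrable_pow_exp k c)
    (((continuous_pow k).mul (fermi_cont c)).aestronglyMeasurable)
  filter_upwards [ae_restrict_mem measurableSet_Ioi] with r hr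
  rw [mem_Ioi] at hr
  show ‖r ^ k * fermi c r‖ ≤ _
  rw [Real.norm_eq_abs, abs_of_nonneg (mul_nonneg (by positivity) (fermi_pos c r).le)]
  exact mul_le_mul_of_nonneg_left (fermi_le c r) (by positivity)

lemma integrableOn_pow_gfun (k : ℕ) (c : ℝ) :
    IntegrableOn (fun r : ℝ => r ^ k * gfun c r) (Ioi 0) := by
  apply Integrable.mono' (integrable_pow_exp k c)
    (((continuous_pow k).mul (gfun_cont c)).aestronglyMeasurable)
  filter_upwards [ae_restrict_mem measurableSet_Ioi] with r hr
  rw [mem_Ioi] at hr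
  show ‖r ^ k * gfun c r‖ ≤ _
  rw [Real.norm_eq_abs, abs_of_nonneg (mul_nonneg (by positivity) (gfun_pos c r).le)]
  exact mul_le_mul_of_nonneg_left (gfun_le c r) (by positivity)

lemma Jk_pos (k : ℕ) (c : ℝ) : 0 < Jk k c := by
  unfold Jk
  rw [setIntegral_pos_iff_support_of_nonneg_ae _ (integrableOn_pow_gfun k c)]
  · have hsub : Ioi (0:ℝ) ⊆ Function.support (fun r : ℝ => r ^ k * gfun c r) ∩ Ioi 0 := by
      intro r hr
      refine ⟨?_, hr⟩
      have h0 := mem_Ioi.mp hr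
      exact (mul_pos (pow_pos h0 k) (gfun_pos c r)).ne'
    calc (0:ℝ≥0∞) < volume (Ioi (0:ℝ)) := by simp
    _ ≤ _ := measure_mono hsub
  · filter_upwards [ae_restrict_mem measurableSet_Ioi] with r hr
    exact mul_nonneg (pow_nonneg (mem_Ioi.mp hr).le k) (gfun_pos c r).le

lemma Ik_pos (k : ℕ) (c : ℝ) : 0 < Ik k c := by
  unfold Ik
  rw [setIntegral_pos_iff_support_of_nonneg_ae _ (integrableOn_pow_fermi k c)]
  · have hsub : Ioi (0:ℝ) ⊆ Function.support (fun r : ℝ => r ^ k * fermi c r) ∩ Ioi 0 := by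
      intro r hr
      refine ⟨?_, hr⟩
      have h0 := mem_Ioi.mp hr
      exact (mul_pos (pow_pos h0 k) (fermi_pos c r)).ne'
    calc (0:ℝ≥0∞) < volume (Ioi (0:ℝ)) := by simp
    _ ≤ _ := measure_mono hsub
  · filter_upwards [ae_restrict_mem measurableSet_Ioi] with r hr
    exact mul_nonneg (pow_nonneg (mem_Ioi.mp hr).le k) (fermi_pos c r).le

lemma hasDerivAt_fermi_c (r c : ℝ) :
    HasDerivAt (fun c => fermi c r) (-(gfun c r)) c := by
  have h1 : HasDerivAt (fun c : ℝ => Real.exp (r ^ 2 + c) + 1) (Real.exp (r ^ 2 + c)) c := by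
    simpa using ((Real.hasDerivAt_exp (r ^ 2 + c)).comp c
      ((hasDerivAt_id c).const_add (r ^ 2))).add_const 1
  have := h1.inv (epos _).ne'
  refine this.congr_deriv ?_
  unfold gfun
  ring

lemma hasDerivAt_fermi_r (c r : ℝ) :
    HasDerivAt (fun r => fermi c r) (-(2 * r * gfun c r)) r := by
  have h1 : HasDerivAt (fun r : ℝ => Real.exp (r ^ 2 + c) + 1) (Real.exp (r ^ 2 + c) * (2 * r)) r := by
    have hp : HasDerivAt (fun r : ℝ => r ^ 2 + c) (2 * r) r := by
      simpa using (hasDerivAt_pow 2 r).add_const c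
    simpa using ((Real.hasDerivAt_exp (r ^ 2 + c)).comp r hp).add_const 1
  have := h1.inv (epos _).ne'
  refine this.congr_deriv ?_
  unfold gfun
  ring

lemma hasDerivAt_Ik (k : ℕ) (c : ℝ) :
    HasDerivAt (Ik k) (-(Jk k c)) c := by
  have key := hasDerivAt_integral_of_dominated_loc_of_deriv_le
    (μ := volume.restrict (Ioi (0:ℝ)))
    (F := fun c r => r ^ k * fermi c r)
    (F' := fun c r => -(r ^ k * gfun c r))
    (x₀ := c) (s := ball c 1) (bound := fun r => r ^ k * Real.exp (-(r ^ 2 + (c - 1))))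
    (ball_mem_nhds c one_pos)
    (Filter.Eventually.of_forall fun x =>
      (((continuous_pow k).mul (fermi_cont x)).aestronglyMeasurable))
    (integrableOn_pow_fermi k c)
    ((((continuous_pow k).mul (gfun_cont c)).neg).aestronglyMeasurable)
    ?_ (integrable_pow_exp k (c - 1)) ?_
  · have := key.2
    unfold Ik Jk
    rw [integral_neg] at this
    exact this
  · filter_upwards [ae_restrict_mem measurableSet_Ioi] with r hr
    intro x hx
    rw [mem_Ioi] at hr
    rw [norm_neg, Real.norm_eq_abs, abs_of_nonneg (mul_nonneg (by positivity) (gfun_pos x r).le)]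
    have h1 : gfun x r ≤ Real.exp (-(r ^ 2 + x)) := gfun_le x r
    have h2 : Real.exp (-(r ^ 2 + x)) ≤ Real.exp (-(r ^ 2 + (c - 1))) := by
      apply Real.exp_le_exp.mpr
      have h3 : |x - c| < 1 := by simpa [Real.dist_eq] using mem_ball.mp hx
      have := abs_lt.mp h3
      linarith [this.1]
    exact mul_le_mul_of_nonneg_left (h1.trans h2) (by positivity)
  · filter_upwards [] with r
    intro x _
    have := (hasDerivAt_fermi_c r x).const_mul (r ^ k)
    simpa [mul_comm, mul_neg] using this

lemma tendsto_pow_fermi (k : ℕ) (c : ℝ) :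
    Tendsto (fun r : ℝ => r ^ k * fermi c r) atTop (nhds 0) := by
  have h1 : Tendsto (fun x : ℝ => x ^ k * Real.exp (-x)) atTop (nhds 0) :=
    tendsto_pow_mul_exp_neg_atTop_nhds_zero k
  have h2 : Tendsto (fun r : ℝ => r ^ 2) atTop atTop := tendsto_pow_atTop (by norm_num)
  have h3 : Tendsto (fun r : ℝ => (r ^ 2) ^ k * Real.exp (-(r ^ 2))) atTop (nhds 0) :=
    h1.comp h2
  have h4 : Tendsto (fun r : ℝ => Real.exp (-c) * ((r ^ 2) ^ k * Real.exp (-(r ^ 2))))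
      atTop (nhds (Real.exp (-c) * 0)) := h3.const_mul _
  rw [mul_zero] at h4
  apply squeeze_zero' ?_ ?_ h4
  · filter_upwards [eventually_ge_atTop (0:ℝ)] with r hr
    exact mul_nonneg (pow_nonneg hr k) (fermi_pos c r).le
  · filter_upwards [eventually_ge_atTop (1:ℝ)] with r hr
    have hb : fermi c r ≤ Real.exp (-(r ^ 2 + c)) := fermi_le c r
    have hpow : r ^ k ≤ (r ^ 2) ^ k := by
      apply pow_le_pow_left₀ (by linarith) ?_ k
      nlinarith
    calc r ^ k * fermi c r ≤ (r ^ 2) ^ k * Real.exp (-(r ^ 2 + c)) := by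
          apply mul_le_mul hpow hb (fermi_pos c r).le (by positivity)
      _ = Real.exp (-c) * ((r ^ 2) ^ k * Real.exp (-(r ^ 2))) := by
          rw [show -(r ^ 2 + c) = -(r^2) + -c by ring, Real.exp_add]; ring

lemma Ik_eq (k : ℕ) (c : ℝ) : Ik k c = (2 / ((k : ℝ) + 1)) * Jk (k + 2) c := by
  set K : ℝ := (k : ℝ) + 1 with hK
  have hK0 : (0:ℝ) < K := by positivity
  set H : ℝ → ℝ := fun r => r ^ (k + 1) / K * fermi c r with hH
  set H' : ℝ → ℝ := fun r => r ^ k * fermi c r - (2 / K) * (r ^ (k + 2) * gfun c r) with hH'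
  have hderiv : ∀ r ∈ Ici (0:ℝ), HasDerivAt H (H' r) r := by
    intro r _
    have h1 : HasDerivAt (fun r : ℝ => r ^ (k + 1) / K) (((k:ℝ) + 1) * r ^ k / K) r := by
      have := (hasDerivAt_pow (k + 1) r).div_const K
      simpa [Nat.add_sub_cancel] using this
    have h2 := h1.mul (hasDerivAt_fermi_r c r)
    refine h2.congr_deriv ?_
    unfold H' K
    field_simp
    ring
  have hint : IntegrableOn H' (Ioi 0) := by
    exact (integrableOn_pow_fermi k c).sub
      (((integrableOn_pow_gfun (k + 2) c)).const_mul (2 / K))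
  have htends : Tendsto H atTop (nhds 0) := by
    have := (tendsto_pow_fermi (k + 1) c).div_const K
    simpa [hH, zero_div, div_mul_eq_mul_div, mul_div_assoc, mul_comm, mul_left_comm,
      div_eq_mul_inv, mul_assoc] using this.congr (fun r => by ring)
  have key := integral_Ioi_of_hasDerivAt_of_tendsto' hderiv hint htends
  have hH0 : H 0 = 0 := by simp [hH]
  rw [hH0, sub_zero] at key
  have hsplit : ∫ r in Ioi (0:ℝ), H' r
      = Ik k c - (2 / K) * Jk (k + 2) c := by
    unfold H'
    have ig : IntegrableOn (fun r : ℝ => (2 / K) * (r ^ (k + 2) * gfun c r)) (Ioi 0) :=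
      (integrableOn_pow_gfun (k + 2) c).const_mul (2 / K)
    rw [integral_sub (integrableOn_pow_fermi k c) ig, integral_const_mul]
    rfl
  rw [hsplit] at key
  linarith [key]

lemma J_sq_lt (c : ℝ) : Jk 4 c ^ 2 < Jk 2 c * Jk 6 c := by
  have hJ2 := Jk_pos 2 c
  have hJ4 := Jk_pos 4 c
  have hJ6 := Jk_pos 6 c
  set t : ℝ := Jk 6 c / Jk 4 c with ht
  have ht0 : 0 < t := div_pos hJ6 hJ4
  have key : 0 < t ^ 2 * Jk 2 c + Jk 6 c - 2 * t * Jk 4 c := by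
    have heq : t ^ 2 * Jk 2 c + Jk 6 c - 2 * t * Jk 4 c
        = ∫ r in Ioi (0:ℝ),
            (t ^ 2 * (r ^ 2 * gfun c r) + r ^ 6 * gfun c r - 2 * t * (r ^ 4 * gfun c r)) := by
      have i2 : IntegrableOn (fun r : ℝ => t ^ 2 * (r ^ 2 * gfun c r)) (Ioi 0) :=
        (integrableOn_pow_gfun 2 c).const_mul (t ^ 2)
      have i26 : IntegrableOn (fun r : ℝ => t ^ 2 * (r ^ 2 * gfun c r) + r ^ 6 * gfun c r)
          (Ioi 0) := i2.add (integrableOn_pow_gfun 6 c)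
      have i4 : IntegrableOn (fun r : ℝ => 2 * t * (r ^ 4 * gfun c r)) (Ioi 0) :=
        (integrableOn_pow_gfun 4 c).const_mul (2 * t)
      rw [integral_sub i26 i4, integral_add i2 (integrableOn_pow_gfun 6 c),
        integral_const_mul, integral_const_mul]
      rfl
    rw [heq]
    rw [setIntegral_pos_iff_support_of_nonneg_ae]
    · have hsub : Ioi (0:ℝ) \ {Real.sqrt t} ⊆
          Function.support (fun r : ℝ =>
            t ^ 2 * (r ^ 2 * gfun c r) + r ^ 6 * gfun c r - 2 * t * (r ^ 4 * gfun c r)) ∩ Ioi 0 := by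
        rintro r ⟨hr, hrs⟩
        have hr0 := mem_Ioi.mp hr
        refine ⟨?_, hr⟩
        have heq2 : t ^ 2 * (r ^ 2 * gfun c r) + r ^ 6 * gfun c r - 2 * t * (r ^ 4 * gfun c r)
            = r ^ 2 * (t - r ^ 2) ^ 2 * gfun c r := by ring
        rw [Function.mem_support, heq2]
        have hne : t - r ^ 2 ≠ 0 := by
          intro h
          apply hrs
          have : r ^ 2 = t := by linarith
          simp only [mem_singleton_iff]
          rw [← this, Real.sqrt_sq hr0.le]
        have hsq : 0 < (t - r ^ 2) ^ 2 := by
          rw [← sq_abs]; exact pow_pos (abs_pos.mpr hne) 2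
        exact (mul_pos (mul_pos (pow_pos hr0 2) hsq) (gfun_pos c r)).ne'
      have hvol : volume (Ioi (0:ℝ) \ {Real.sqrt t}) = ⊤ := by
        rw [measure_diff_null (measure_singleton _)]
        simp
      calc (0:ℝ≥0∞) < volume (Ioi (0:ℝ) \ {Real.sqrt t}) := by rw [hvol]; exact ENNReal.zero_lt_top
        _ ≤ _ := measure_mono hsub
    · filter_upwards [ae_restrict_mem measurableSet_Ioi] with r hr
      have hr0 := mem_Ioi.mp hr
      have heq2 : t ^ 2 * (r ^ 2 * gfun c r) + r ^ 6 * gfun c r - 2 * t * (r ^ 4 * gfun c r)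
          = r ^ 2 * (t - r ^ 2) ^ 2 * gfun c r := by ring
      rw [heq2]
      exact mul_nonneg (mul_nonneg (sq_nonneg r) (sq_nonneg _)) (gfun_pos c r).le
    · exact (((integrableOn_pow_gfun 2 c).const_mul (t ^ 2)).add
        (integrableOn_pow_gfun 6 c)).sub ((integrableOn_pow_gfun 4 c).const_mul (2 * t))
  have h1 : t * Jk 4 c = Jk 6 c := div_mul_cancel₀ _ hJ4.ne'
  have h2 : Jk 6 c < t ^ 2 * Jk 2 c := by linarith
  have h3 : t ^ 2 * Jk 4 c ^ 2 = Jk 6 c ^ 2 := by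
    rw [← h1]; ring
  nlinarith [mul_lt_mul_of_pos_right h2 (pow_pos hJ4 2), hJ6, h3]

def kappa : ℝ := 3 * (volume (ball (0 : EuclideanSpace ℝ (Fin 3)) 1)).toReal

lemma kappa_pos : 0 < kappa := by
  unfold kappa
  have h1 : 0 < volume (ball (0 : EuclideanSpace ℝ (Fin 3)) 1) :=
    measure_ball_pos _ _ one_pos
  have h2 : volume (ball (0 : EuclideanSpace ℝ (Fin 3)) 1) < ⊤ := measure_ball_lt_top
  have := ENNReal.toReal_pos h1.ne' h2.ne
  linarith

lemma finrank_E3 : Module.finrank ℝ (EuclideanSpace ℝ (Fin 3)) = 3 := by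
  simp [finrank_euclideanSpace]

lemma N_eq (c : ℝ) :
    (∫ p : EuclideanSpace ℝ (Fin 3), 1 / (Real.exp (‖p‖ ^ 2 + c) + 1)) = kappa * Ik 2 c := by
  have h := MeasureTheory.integral_fun_norm_addHaar
    (volume : Measure (EuclideanSpace ℝ (Fin 3))) (fun y => fermi c y)
  rw [finrank_E3] at h
  have hL : (∫ p : EuclideanSpace ℝ (Fin 3), 1 / (Real.exp (‖p‖ ^ 2 + c) + 1))
      = ∫ p : EuclideanSpace ℝ (Fin 3), fermi c ‖p‖ := by
    congr 1; funext p; rw [one_div]; rfl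
  rw [hL, h]
  simp only [smul_eq_mul, nsmul_eq_mul]
  rw [show ((3:ℕ):ℝ) = 3 by norm_num]
  unfold kappa Ik
  rw [← mul_assoc]
  rfl

lemma D_eq (c : ℝ) :
    (∫ p : EuclideanSpace ℝ (Fin 3), ‖p‖ ^ 2 / (Real.exp (‖p‖ ^ 2 + c) + 1)) = kappa * Ik 4 c := by
  have h := MeasureTheory.integral_fun_norm_addHaar
    (volume : Measure (EuclideanSpace ℝ (Fin 3))) (fun y => y ^ 2 * fermi c y)
  rw [finrank_E3] at h
  have hL : (∫ p : EuclideanSpace ℝ (Fin 3), ‖p‖ ^ 2 / (Real.exp (‖p‖ ^ 2 + c) + 1))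
      = ∫ p : EuclideanSpace ℝ (Fin 3), ‖p‖ ^ 2 * fermi c ‖p‖ := by
    simp only [div_eq_mul_inv]; rfl
  rw [hL, h]
  simp only [smul_eq_mul, nsmul_eq_mul]
  rw [show ((3:ℕ):ℝ) = 3 by norm_num]
  unfold kappa Ik
  rw [← mul_assoc]
  congr 1
  apply setIntegral_congr_fun measurableSet_Ioi
  intro y _
  simp only [smul_eq_mul]
  ring

lemma betaFn_eq : betaFn = fun c => (kappa * Ik 2 c) / (kappa * Ik 4 c) ^ ((3:ℝ)/5) := by
  funext c
  unfold betaFn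
  rw [N_eq, D_eq]

lemma exists_deriv_neg (c : ℝ) : ∃ d : ℝ, d < 0 ∧ HasDerivAt betaFn d c := by
  have hk := kappa_pos
  have hI2 := Ik_pos 2 c
  have hI4 := Ik_pos 4 c
  have hJ2 := Jk_pos 2 c
  have hJ4 := Jk_pos 4 c
  have hJ6 := Jk_pos 6 c
  set A : ℝ := kappa * Ik 4 c with hAdef
  have hA : 0 < A := mul_pos hk hI4
  set P : ℝ := A ^ ((3:ℝ)/5) with hPdef
  have hP : 0 < P := Real.rpow_pos_of_pos hA _
  have hu : HasDerivAt (fun c => kappa * Ik 2 c) (kappa * -(Jk 2 c)) c :=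
    (hasDerivAt_Ik 2 c).const_mul kappa
  have hv0 : HasDerivAt (fun c => kappa * Ik 4 c) (kappa * -(Jk 4 c)) c :=
    (hasDerivAt_Ik 4 c).const_mul kappa
  have hrpow : HasDerivAt (fun x : ℝ => x ^ ((3:ℝ)/5)) ((3:ℝ)/5 * A ^ ((3:ℝ)/5 - 1)) A :=
    Real.hasDerivAt_rpow_const (Or.inl hA.ne')
  have hv : HasDerivAt (fun c => (kappa * Ik 4 c) ^ ((3:ℝ)/5))
      ((3:ℝ)/5 * A ^ ((3:ℝ)/5 - 1) * (kappa * -(Jk 4 c))) c := by have := hrpow.comp c hv0; exact this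
  have hvne : (kappa * Ik 4 c) ^ ((3:ℝ)/5) ≠ 0 := hP.ne'
  have hdiv : HasDerivAt (fun c => (kappa * Ik 2 c) / (kappa * Ik 4 c) ^ ((3:ℝ)/5)) _ c := hu.div hv hvne
  rw [← betaFn_eq] at hdiv
  refine ⟨_, ?_, hdiv⟩
  apply div_neg_of_neg_of_pos
  · -- numerator negative
    have hA35 : A ^ ((3:ℝ)/5 - 1) = P / A := by
      rw [Real.rpow_sub hA, Real.rpow_one]
    have key : (3:ℝ)/5 * Ik 2 c * Jk 4 c < Jk 2 c * Ik 4 c := by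
      have e2 := Ik_eq 2 c
      have e4 := Ik_eq 4 c
      norm_num at e2 e4
      rw [e2, e4]
      nlinarith [J_sq_lt c, hJ4]
    have hmain : (3:ℝ)/5 * (kappa * Ik 2 c) * (kappa * Jk 4 c) < (kappa * Jk 2 c) * A := by
      rw [hAdef]
      nlinarith [mul_lt_mul_of_pos_left key (mul_pos hk hk)]
    have hform : kappa * -(Jk 2 c) * ((kappa * Ik 4 c) ^ ((3:ℝ)/5))
        - (kappa * Ik 2 c) * ((3:ℝ)/5 * A ^ ((3:ℝ)/5 - 1) * (kappa * -(Jk 4 c)))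
        = (P / A) * ((3:ℝ)/5 * (kappa * Ik 2 c) * (kappa * Jk 4 c) - (kappa * Jk 2 c) * A) := by
      rw [hA35]
      have : (kappa * Ik 4 c) ^ ((3:ℝ)/5) = P := rfl
      rw [this]
      field_simp
      ring
    rw [hform]
    exact mul_neg_of_pos_of_neg (div_pos hP hA) (by linarith)
  · have : (kappa * Ik 4 c) ^ ((3:ℝ)/5) = P := rfl
    rw [this]
    positivity

end BetaAux

theorem stmt_10 : StrictAntiOn betaFn (Set.Ici (-Real.log 3)) := by
  apply strictAntiOn_of_deriv_neg (convex_Ici _)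
  · intro x _
    obtain ⟨d, _, hd⟩ := BetaAux.exists_deriv_neg x
    exact hd.differentiableAt.continuousAt.continuousWithinAt
  · intro x _
    obtain ⟨d, hdneg, hd⟩ := BetaAux.exists_deriv_neg x
    rw [hd.deriv]
    exact hdneg
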